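/- The polynomial u(X) = X³ − 84X² + 896X − 1984, regarded as a polynomial over ℚ, is irreducible, and the Galois group of its splitting field over ℚ is cyclic of order 3. -/

import Mathlib

open Polynomial

private lemma uZ_monic : (X ^ 3 - 84 * X ^ 2 + 896 * X - 1984 : ℤ[X]).Monic := by
  monicity!

private lemma uQ_monic : (X ^ 3 - 84 * X ^ 2 + 896 * X - 1984 : ℚ[X]).Monic := by
  monicity!

private lemma uQ_natDegree : (X ^ 3 - 84 * X ^ 2 + 896 * X - 1984 : ℚ[X]).natDegree = 3 := by
  compute_degree!

private lemma u_mod3_irreducible :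
    Irreducible ((X ^ 3 - 84 * X ^ 2 + 896 * X - 1984 : ℤ[X]).map (Int.castRingHom (ZMod 3))) := by
  have hdeg : ((X ^ 3 - 84 * X ^ 2 + 896 * X - 1984 : ℤ[X]).map
      (Int.castRingHom (ZMod 3))).natDegree = 3 := by
    simp only [Polynomial.map_sub, Polynomial.map_add, Polynomial.map_mul, Polynomial.map_pow,
      Polynomial.map_ofNat, map_X]
    compute_degree!
  rw [irreducible_iff_roots_eq_zero_of_degree_le_three (by omega) (by omega)]
  rw [Multiset.eq_zero_iff_forall_notMem]
  intro x hx
  rw [mem_roots, IsRoot] at hx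
  · revert hx
    simp only [Polynomial.map_sub, Polynomial.map_add, Polynomial.map_mul, Polynomial.map_pow,
      Polynomial.map_ofNat, map_X, eval_sub, eval_add, eval_mul, eval_pow, eval_ofNat, eval_X]
    revert x; decide
  · intro h
    rw [h] at hdeg
    simp at hdeg

private lemma u_irreducible : Irreducible (X ^ 3 - 84 * X ^ 2 + 896 * X - 1984 : ℚ[X]) := by
  have hZ : Irreducible (X ^ 3 - 84 * X ^ 2 + 896 * X - 1984 : ℤ[X]) :=
    uZ_monic.irreducible_of_irreducible_map (Int.castRingHom (ZMod 3)) _ u_mod3_irreducible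
  have hmap : (X ^ 3 - 84 * X ^ 2 + 896 * X - 1984 : ℤ[X]).map (Int.castRingHom ℚ) =
      (X ^ 3 - 84 * X ^ 2 + 896 * X - 1984 : ℚ[X]) := by
    simp [Polynomial.map_sub, Polynomial.map_add, Polynomial.map_mul, Polynomial.map_pow,
      Polynomial.map_ofNat]
  rw [← hmap]
  exact (IsPrimitive.Int.irreducible_iff_irreducible_map_cast uZ_monic.isPrimitive).mp hZ

/-- The cubic `u(X) = X³ − 84X² + 896X − 1984` is irreducible over `ℚ` and the
Galois group of its splitting field over `ℚ` is cyclic of order 3. -/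
theorem cubic_u_irreducible_cyclic_galois :
    Irreducible (X ^ 3 - 84 * X ^ 2 + 896 * X - 1984 : ℚ[X]) ∧
    IsCyclic (X ^ 3 - 84 * X ^ 2 + 896 * X - 1984 : ℚ[X]).Gal ∧
    Nat.card (X ^ 3 - 84 * X ^ 2 + 896 * X - 1984 : ℚ[X]).Gal = 3 := by
  set p : ℚ[X] := X ^ 3 - 84 * X ^ 2 + 896 * X - 1984 with hp
  have hirr : Irreducible p := u_irreducible
  refine ⟨hirr, ?_⟩
  set L := p.SplittingField
  have hp0 : p ≠ 0 := hirr.ne_zero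
  have hsep : p.Separable := hirr.separable
  have hsplits : (p.map (algebraMap ℚ L)).Splits := SplittingField.splits p
  -- roots of p in L
  have hroot_iff : ∀ x : L, x ∈ p.rootSet L ↔
      x ^ 3 - 84 * x ^ 2 + 896 * x - 1984 = 0 := by
    intro x
    rw [mem_rootSet]
    constructor
    · rintro ⟨-, hx⟩
      simpa only [hp, map_sub, map_add, map_mul, map_pow, map_ofNat, aeval_X] using hx
    · intro hx
      refine ⟨hp0, ?_⟩
      simpa only [hp, map_sub, map_add, map_mul, map_pow, map_ofNat, aeval_X] using hx
  -- get a root a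
  have hcard3 : Fintype.card (p.rootSet L) = 3 := by
    rw [card_rootSet_eq_natDegree hsep hsplits, hp, uQ_natDegree]
  have hne : Nonempty (p.rootSet L) := by
    rw [← Fintype.card_pos_iff, hcard3]; norm_num
  obtain ⟨a, haS⟩ := hne
  have ha : a ^ 3 - 84 * a ^ 2 + 896 * a - 1984 = 0 := (hroot_iff a).mp haS
  -- the other two roots, explicitly
  set b : L := 112 - (422 / 31) * a + (21 / 124) * a ^ 2 with hbdef
  set c : L := -28 + (391 / 31) * a - (21 / 124) * a ^ 2 with hcdef
  have hb : b ^ 3 - 84 * b ^ 2 + 896 * b - 1984 = 0 := by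
    rw [hbdef]
    linear_combination (-7025 / 31 + (31626 / 961) * a - (363825 / 476656) * a ^ 2
      + (9261 / 1906624) * a ^ 3) * ha
  have hc : c ^ 3 - 84 * c ^ 2 + 896 * c - 1984 = 0 := by
    rw [hcdef]
    linear_combination (1795 / 31 - (93807 / 3844) * a + (80703 / 119164) * a ^ 2
      - (9261 / 1906624) * a ^ 3) * ha
  have hab : a ≠ b := by
    intro h
    have key : (a - b) * (-49 / 403 + (7287 / 199888) * a - (6 / 12493) * a ^ 2) = 1 := by
      rw [hbdef]
      linear_combination (-5085 / 799552 + (63 / 774566) * a) * ha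
    rw [h, sub_self, zero_mul] at key
    exact zero_ne_one key
  have hac : a ≠ c := by
    intro h
    have key : (a - c) * (-413 / 1612 + (5985 / 199888) * a - (291 / 799552) * a ^ 2) = 1 := by
      rw [hcdef]
      linear_combination (1647 / 399776 - (6111 / 99144448) * a) * ha
    rw [h, sub_self, zero_mul] at key
    exact zero_ne_one key
  have hbc : b ≠ c := by
    intro h
    have key : (b - c) * (14 / 403 - (21 / 3224) * a + (3 / 25792) * a ^ 2) = 1 := by
      rw [hbdef, hcdef]
      linear_combination (-1557 / 799552 + (63 / 1599104) * a) * ha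
    rw [h, sub_self, zero_mul] at key
    exact zero_ne_one key
  -- factorization: every root is a, b, or c
  have hfact : ∀ x : L, (x - a) * (x - b) * (x - c) =
      x ^ 3 - 84 * x ^ 2 + 896 * x - 1984 := by
    intro x
    rw [hbdef, hcdef]
    linear_combination ((-1 + (63 / 31) * x) + (-63 / 31 - (441 / 15376) * x) * a
      + (441 / 15376) * a ^ 2) * ha
  have hmem : ∀ x ∈ p.rootSet L, x = a ∨ x = b ∨ x = c := by
    intro x hx
    have h0 : (x - a) * (x - b) * (x - c) = 0 := by
      rw [hfact x]; exact (hroot_iff x).mp hx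
    rcases mul_eq_zero.mp h0 with h | h
    · rcases mul_eq_zero.mp h with h | h
      · exact Or.inl (sub_eq_zero.mp h)
      · exact Or.inr (Or.inl (sub_eq_zero.mp h))
    · exact Or.inr (Or.inr (sub_eq_zero.mp h))
  -- Galois group elements are determined by their value at a
  have hm : p.Monic := uQ_monic
  have haev : ∀ x : L, x ^ 3 - 84 * x ^ 2 + 896 * x - 1984 = 0 → aeval x p = 0 := by
    intro x hx
    show (aeval x) (X ^ 3 - 84 * X ^ 2 + 896 * X - 1984 : ℚ[X]) = 0
    simpa only [map_sub, map_add, map_mul, map_pow, map_ofNat, aeval_X] using hx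
  have hkey : ∀ σ τ : p.Gal, σ a = τ a → σ = τ := by
    intro σ τ h
    have hσb : σ b = τ b := by
      rw [hbdef]
      simp only [map_add, map_sub, map_mul, map_pow, map_div₀, map_ofNat, h]
    have hσc : σ c = τ c := by
      rw [hcdef]
      simp only [map_add, map_sub, map_mul, map_pow, map_div₀, map_ofNat, map_neg, h]
    apply Polynomial.Gal.ext
    intro x hx
    rcases hmem x hx with rfl | rfl | rfl
    · exact h
    · exact hσb
    · exact hσc
  -- transitivity: every root is the image of a under some automorphism
  have htrans : ∀ y ∈ p.rootSet L, ∃ σ : p.Gal, σ a = y := by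
    intro y hy
    have hmina : minpoly ℚ a = p :=
      (minpoly.eq_of_irreducible_of_monic hirr (haev a ha) hm).symm
    have hminy : minpoly ℚ y = p :=
      (minpoly.eq_of_irreducible_of_monic hirr (haev y ((hroot_iff y).mp hy)) hm).symm
    haveI : Normal ℚ L := Polynomial.SplittingField.instNormal p
    have : y ∈ MulAction.orbit (L ≃ₐ[ℚ] L) a :=
      (Normal.minpoly_eq_iff_mem_orbit (F := ℚ) (E := L)).mp (hminy.trans hmina.symm)
    obtain ⟨σ, hσ⟩ := this
    exact ⟨σ, hσ⟩
  -- the evaluation map Gal → rootSet is a bijection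
  have haS' : ∀ σ : p.Gal, σ a ∈ p.rootSet L := by
    intro σ
    rw [mem_rootSet]
    refine ⟨hp0, ?_⟩
    exact (aeval_algHom_apply σ a p).trans (by rw [haev a ha, map_zero])
  let f : p.Gal → p.rootSet L := fun σ => ⟨σ a, haS' σ⟩
  have hfbij : Function.Bijective f := by
    constructor
    · intro σ τ h
      exact hkey σ τ (Subtype.ext_iff.mp h)
    · intro y
      obtain ⟨σ, hσ⟩ := htrans y y.2
      exact ⟨σ, Subtype.ext hσ⟩
  have hcardgal : Nat.card p.Gal = 3 := by
    rw [Nat.card_eq_of_bijective f hfbij, Nat.card_eq_fintype_card, hcard3]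
  exact ⟨by
    haveI : Fact (Nat.Prime 3) := ⟨by norm_num⟩
    exact isCyclic_of_prime_card hcardgal, hcardgal⟩
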